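/- Let T be a set of permutation patterns of arbitrary lengths and let m ≥ 1. Suppose there exists n_0 ∈ ℕ such that for every n ≥ n_0 the group ⟨S_n(T)⟩ is isomorphic to the alternating group A_m. Then m ≤ 2 (equivalently, A_m is the trivial group). -/

import Mathlib

/-- A permutation `π ∈ S_n` contains the pattern `τ ∈ S_k` if there is a strictly
increasing `f : Fin k → Fin n` such that `τ a < τ b ↔ π (f a) < π (f b)`. -/
def PermContains {k n : ℕ} (τ : Equiv.Perm (Fin k)) (π : Equiv.Perm (Fin n)) : Prop :=
  ∃ f : Fin k → Fin n, StrictMono f ∧ ∀ a b : Fin k, τ a < τ b ↔ π (f a) < π (f b)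

/-- `avoidSet n T` is `S_n(T)`: the permutations of `Fin n` avoiding every pattern in `T`,
where `T` is a set of permutations of arbitrary lengths. -/
def avoidSet (n : ℕ) (T : Set (Σ k : ℕ, Equiv.Perm (Fin k))) : Set (Equiv.Perm (Fin n)) :=
  {π | ∀ τ ∈ T, ¬ PermContains τ.2 π}

open Equiv Equiv.Perm Finset

section Aux

/-- inversion indicator, symmetric. -/
private def eps {N : ℕ} (σ : Equiv.Perm (Fin N)) (a b : Fin N) : ℤˣ :=
  if (σ a < σ b ↔ a < b) then 1 else -1

private lemma eps_symm {N : ℕ} (σ : Equiv.Perm (Fin N)) (a b : Fin N) :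
    eps σ a b = eps σ b a := by
  rcases lt_trichotomy a b with h | h | h
  · have h2 : ¬ b < a := not_lt.2 h.le
    have h3 : σ a ≠ σ b := fun e => h.ne (σ.injective e)
    unfold eps
    rcases lt_or_gt_of_ne h3 with h4 | h4 <;>
      simp [h, h2, h4, not_lt.2 h4.le, lt_irrefl]
  · subst h; rfl
  · have h2 : ¬ a < b := not_lt.2 h.le
    have h3 : σ b ≠ σ a := fun e => h.ne (σ.injective e)
    unfold eps
    rcases lt_or_gt_of_ne h3 with h4 | h4 <;>
      simp [h, h2, h4, not_lt.2 h4.le, lt_irrefl]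

/-- pair set of a finset -/
private def pairsOf {N : ℕ} (S : Finset (Fin N)) : Finset (Fin N × Fin N) :=
  (S ×ˢ S).filter fun p => p.1 < p.2

private def Fprod {N : ℕ} (σ : Equiv.Perm (Fin N)) (S : Finset (Fin N)) : ℤˣ :=
  ∏ p ∈ pairsOf S, eps σ p.1 p.2

private lemma sign_eq_signAux' {N : ℕ} (σ : Equiv.Perm (Fin N)) : sign σ = signAux σ := by
  have hσ : σ ∈ Subgroup.closure {τ : Equiv.Perm (Fin N) | τ.IsSwap} := by
    rw [closure_isSwap]; trivial
  induction hσ using Subgroup.closure_induction with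
  | mem x hx => obtain ⟨a, b, hab, rfl⟩ := hx; rw [Equiv.Perm.sign_swap hab, signAux_swap hab]
  | one => rw [Equiv.Perm.sign_one, signAux_one]
  | mul x y hx hy ihx ihy => rw [Equiv.Perm.sign_mul, signAux_mul, ihx, ihy]
  | inv x hx ihx => rw [Equiv.Perm.sign_inv, signAux_inv, ihx]

private lemma sign_eq_Fprod_univ {N : ℕ} (σ : Equiv.Perm (Fin N)) : sign σ = Fprod σ univ := by
  rw [sign_eq_signAux']
  unfold signAux Fprod pairsOf
  refine Finset.prod_bij (fun x _ => ((x.2, x.1) : Fin N × Fin N)) ?_ ?_ ?_ ?_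
  · intro x hx
    exact Finset.mem_filter.2 ⟨Finset.mem_product.2 ⟨mem_univ _, mem_univ _⟩, mem_finPairsLT.1 hx⟩
  · intro x hx y hy hxy
    simp only [Prod.mk.injEq] at hxy
    exact Sigma.ext hxy.2 (heq_of_eq hxy.1)
  · intro p hp
    simp only [mem_filter] at hp
    exact ⟨⟨p.2, p.1⟩, mem_finPairsLT.2 hp.2, rfl⟩
  · intro x hx
    have h1 : x.2 < x.1 := mem_finPairsLT.1 hx
    have h3 : σ x.2 ≠ σ x.1 := fun e => h1.ne (σ.injective e)
    unfold eps
    rcases lt_or_gt_of_ne h3 with h4 | h4 <;>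
      simp [h1, not_lt.2 h1.le, h4, not_lt.2 h4.le, le_of_lt, h4.le, not_le.2 h4]

private lemma Fprod_erase {N : ℕ} (σ : Equiv.Perm (Fin N)) (S : Finset (Fin N)) {c : Fin N}
    (hc : c ∈ S) :
    Fprod σ S = (∏ x ∈ S.erase c, eps σ c x) * Fprod σ (S.erase c) := by
  classical
  unfold Fprod
  rw [← Finset.prod_filter_mul_prod_filter_not (pairsOf S) (fun p => p.1 = c ∨ p.2 = c)]
  congr 1
  · refine (Finset.prod_bij (fun x _ => (if c < x then (c, x) else (x, c))) ?_ ?_ ?_ ?_).symm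
    · intro x hx
      have hxS : x ∈ S := (Finset.mem_erase.1 hx).2
      have hxc : x ≠ c := (Finset.mem_erase.1 hx).1
      by_cases h : c < x
      · rw [if_pos h]
        exact Finset.mem_filter.2 ⟨Finset.mem_filter.2
          ⟨Finset.mem_product.2 ⟨hc, hxS⟩, h⟩, Or.inl rfl⟩
      · have h' : x < c := (hxc.lt_or_gt).resolve_right h
        rw [if_neg h]
        exact Finset.mem_filter.2 ⟨Finset.mem_filter.2
          ⟨Finset.mem_product.2 ⟨hxS, hc⟩, h'⟩, Or.inr rfl⟩
    · intro x hx y hy hxy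
      have hxc : x ≠ c := (Finset.mem_erase.1 hx).1
      have hyc : y ≠ c := (Finset.mem_erase.1 hy).1
      split_ifs at hxy with h1 h2 h2
      · exact congrArg Prod.snd hxy
      · exact absurd (congrArg Prod.snd hxy) hxc
      · exact absurd (congrArg Prod.fst hxy) hxc
      · exact congrArg Prod.fst hxy
    · rintro ⟨a, b⟩ hp
      simp only [pairsOf, mem_filter, mem_product] at hp
      obtain ⟨⟨⟨haS, hbS⟩, hab⟩, hor⟩ := hp
      rcases hor with rfl | rfl
      · exact ⟨b, Finset.mem_erase.2 ⟨hab.ne', hbS⟩, by simp [if_pos hab]⟩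
      · exact ⟨a, Finset.mem_erase.2 ⟨hab.ne, haS⟩, by simp [if_neg (not_lt.2 hab.le)]⟩
    · intro x hx
      by_cases h : c < x
      · simp [if_pos h]
      · simp [if_neg h, eps_symm]
  · congr 1
    ext ⟨a, b⟩
    simp only [pairsOf, mem_filter, mem_product, mem_erase]
    push_neg
    constructor
    · rintro ⟨⟨⟨haS, hbS⟩, hab⟩, hac, hbc⟩
      exact ⟨⟨⟨hac, haS⟩, ⟨hbc, hbS⟩⟩, hab⟩
    · rintro ⟨⟨⟨hac, haS⟩, hbc, hbS⟩, hab⟩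
      exact ⟨⟨⟨haS, hbS⟩, hab⟩, hac, hbc⟩

private lemma pattern_exists {j N : ℕ} (σ : Equiv.Perm (Fin N)) (f : Fin j → Fin N)
    (hf : StrictMono f) :
    ∃ ρ : Equiv.Perm (Fin j), ∀ a b, ρ a < ρ b ↔ σ (f a) < σ (f b) := by
  classical
  set g : Fin j → Fin N := fun a => σ (f a) with hg
  have hginj : Function.Injective g := fun a b h => hf.injective (σ.injective h)
  set V : Finset (Fin N) := Finset.image g univ with hV
  have hVcard : V.card = j := by
    rw [hV, Finset.card_image_of_injective _ hginj, card_univ, Fintype.card_fin]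
  set e := V.orderIsoOfFin hVcard with he
  have hmem : ∀ a, g a ∈ V := fun a => Finset.mem_image_of_mem g (mem_univ a)
  set ρ0 : Fin j → Fin j := fun a => e.symm ⟨g a, hmem a⟩ with hρ0
  have hinj : Function.Injective ρ0 := by
    intro a b h
    exact hginj (congrArg Subtype.val (e.symm.injective h))
  refine ⟨Equiv.ofBijective ρ0 (Finite.injective_iff_bijective.1 hinj), fun a b => ?_⟩
  show ρ0 a < ρ0 b ↔ σ (f a) < σ (f b)
  rw [hρ0]
  rw [e.symm.lt_iff_lt]
  exact Iff.rfl

private lemma pattern_sign {j N : ℕ} (σ : Equiv.Perm (Fin N)) (f : Fin j → Fin N)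
    (hf : StrictMono f) (ρ : Equiv.Perm (Fin j))
    (hiff : ∀ a b, ρ a < ρ b ↔ σ (f a) < σ (f b)) :
    sign ρ = Fprod σ (Finset.image f univ) := by
  rw [sign_eq_Fprod_univ]
  unfold Fprod pairsOf
  refine Finset.prod_bij (fun p _ => ((f p.1, f p.2) : Fin N × Fin N)) ?_ ?_ ?_ ?_
  · intro p hp
    have hlt : p.1 < p.2 := (Finset.mem_filter.1 hp).2
    exact Finset.mem_filter.2 ⟨Finset.mem_product.2
      ⟨Finset.mem_image_of_mem f (mem_univ _), Finset.mem_image_of_mem f (mem_univ _)⟩,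
      hf hlt⟩
  · intro p hp q hq hpq
    simp only [Prod.mk.injEq] at hpq
    exact Prod.ext (hf.injective hpq.1) (hf.injective hpq.2)
  · rintro ⟨x, y⟩ hp
    simp only [mem_filter, mem_product, Finset.mem_image] at hp
    obtain ⟨⟨⟨a, -, rfl⟩, ⟨b, -, rfl⟩⟩, hab⟩ := hp
    refine ⟨(a, b), ?_, rfl⟩
    exact Finset.mem_filter.2 ⟨Finset.mem_product.2 ⟨mem_univ _, mem_univ _⟩, hf.lt_iff_lt.1 hab⟩
  · intro p hp
    have : (ρ p.1 < ρ p.2 ↔ p.1 < p.2) = (σ (f p.1) < σ (f p.2) ↔ f p.1 < f p.2) :=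
      propext (iff_congr (hiff p.1 p.2) hf.lt_iff_lt.symm)
    simp only [eps, this]

private lemma strictMono_perm_eq_one {N : ℕ} (σ : Equiv.Perm (Fin N)) (h : StrictMono σ) :
    σ = 1 := by
  have h2 : StrictMono (σ⁻¹ : Equiv.Perm (Fin N)) := by
    intro a b hab
    have := h.lt_iff_lt (a := σ⁻¹ a) (b := σ⁻¹ b)
    simp only [Equiv.Perm.inv_def, Equiv.apply_symm_apply] at this
    exact this.1 hab
  have : WellFoundedLT (Fin N) := inferInstance
  ext x
  have hx1 : x ≤ σ x := h.le_apply
  have hx2 : x ≤ σ⁻¹ x := h2.le_apply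
  have hx3 : σ x ≤ σ (σ⁻¹ x) := h.monotone hx2
  rw [Equiv.Perm.inv_def, Equiv.apply_symm_apply] at hx3
  exact le_antisymm hx3 hx1

private lemma image_succAbove (N : ℕ) (c : Fin (N + 1)) :
    Finset.image c.succAbove univ = (univ : Finset (Fin (N + 1))).erase c := by
  apply Finset.eq_of_subset_of_card_le
  · intro x hx
    obtain ⟨a, -, rfl⟩ := Finset.mem_image.1 hx
    exact Finset.mem_erase.2 ⟨c.succAbove_ne a, mem_univ _⟩
  · rw [Finset.card_erase_of_mem (mem_univ c),
      Finset.card_image_of_injective _ (Fin.succAbove_right_injective),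
      card_univ, card_univ, Fintype.card_fin, Fintype.card_fin]
    omega

private lemma permContains_trans {i j N : ℕ} {τ : Equiv.Perm (Fin i)} {ρ : Equiv.Perm (Fin j)}
    {σ : Equiv.Perm (Fin N)} (h1 : PermContains τ ρ) (h2 : PermContains ρ σ) :
    PermContains τ σ := by
  obtain ⟨f, hf, hif⟩ := h1
  obtain ⟨g, hg, hig⟩ := h2
  exact ⟨g ∘ f, hg.comp hf, fun a b => (hif a b).trans (hig (f a) (f b))⟩

private lemma pattern_avoids {j N : ℕ} {T : Set (Σ k : ℕ, Equiv.Perm (Fin k))}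
    {ρ : Equiv.Perm (Fin j)} {σ : Equiv.Perm (Fin N)} (hc : PermContains ρ σ)
    (hσ : σ ∈ avoidSet N T) : ρ ∈ avoidSet j T := by
  intro τ hτ hcon
  exact hσ τ hτ (permContains_trans hcon hc)

private lemma avoid_even {T : Set (Σ k : ℕ, Equiv.Perm (Fin k))} {m n₀ : ℕ}
    (h : ∀ n : ℕ, n₀ ≤ n →
      Nonempty (Subgroup.closure (avoidSet n T) ≃* alternatingGroup (Fin m)))
    {n : ℕ} (hn : n₀ ≤ n) {π : Equiv.Perm (Fin n)} (hπ : π ∈ avoidSet n T) :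
    Equiv.Perm.sign π = 1 := by
  obtain ⟨e⟩ := h n hn
  set G := Subgroup.closure (avoidSet n T) with hG
  set φ : alternatingGroup (Fin m) →* ℤˣ :=
    (Equiv.Perm.sign.comp G.subtype).comp e.symm.toMonoidHom with hφ
  have hker : alternatingGroup (Fin m) ≤
      Subgroup.map (alternatingGroup (Fin m)).subtype φ.ker := by
    refine le_trans (le_of_eq Equiv.Perm.closure_three_cycles_eq_alternating.symm)
      ((Subgroup.closure_le _).2 ?_)
    intro g hg
    have hg3 : g ^ 3 = 1 := by rw [← hg.orderOf]; exact pow_orderOf_eq_one g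
    have hmem : g ∈ alternatingGroup (Fin m) := hg.mem_alternatingGroup
    refine ⟨⟨g, hmem⟩, ?_, rfl⟩
    have hpow : (⟨g, hmem⟩ : alternatingGroup (Fin m)) ^ 3 = 1 := by
      apply Subtype.ext
      rw [SubmonoidClass.coe_pow]
      exact hg3
    have h3 : (φ ⟨g, hmem⟩) ^ 3 = 1 := by
      rw [← map_pow, hpow, map_one]
    rcases Int.units_eq_one_or (φ ⟨g, hmem⟩) with h1 | h1
    · simpa [MonoidHom.mem_ker] using h1
    · rw [h1] at h3; exact absurd h3 (by decide)
  have hπG : π ∈ G := Subgroup.subset_closure hπ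
  obtain ⟨y, hy, hyeq⟩ := Subgroup.mem_map.1 (hker (e ⟨π, hπG⟩).2)
  have hyy : y = e ⟨π, hπG⟩ := Subtype.ext hyeq
  rw [hyy] at hy
  have h1 : φ (e ⟨π, hπG⟩) = 1 := hy
  simpa [hφ] using h1

end Aux

theorem alternating_eventually_constant_group (T : Set (Σ k : ℕ, Equiv.Perm (Fin k)))
    (m : ℕ) (hm : 1 ≤ m)
    (h : ∃ n₀ : ℕ, ∀ n : ℕ, n₀ ≤ n →
      Nonempty (Subgroup.closure (avoidSet n T) ≃* alternatingGroup (Fin m))) :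
    m ≤ 2 := by
  by_contra hm3
  push_neg at hm3
  obtain ⟨n₀, h⟩ := h
  obtain ⟨e⟩ := h (n₀ + 2) (by omega)
  have hcard : 3 ≤ Nat.card (Fin m) := by simp; omega
  have hnt : Nontrivial (alternatingGroup (Fin m)) :=
    alternatingGroup.nontrivial_of_three_le_card hcard
  have hntG : Nontrivial ↥(Subgroup.closure (avoidSet (n₀ + 2) T)) := e.toEquiv.nontrivial
  -- find a nontrivial avoider
  have hns : ¬ (avoidSet (n₀ + 2) T ⊆ {1}) := by
    intro hsub
    have hle : Subgroup.closure (avoidSet (n₀ + 2) T) ≤ ⊥ := by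
      rw [Subgroup.closure_le]
      intro x hx
      simpa using hsub hx
    obtain ⟨x, y, hxy⟩ := hntG
    apply hxy
    have hx := Subgroup.mem_bot.1 (hle x.2)
    have hy := Subgroup.mem_bot.1 (hle y.2)
    exact Subtype.ext (hx.trans hy.symm)
  obtain ⟨σ, hσav, hσne⟩ := Set.not_subset.1 hns
  rw [Set.mem_singleton_iff] at hσne
  have hsign : Equiv.Perm.sign σ = 1 := avoid_even h (by omega) hσav
  -- one-point deletions
  have h1 : ∀ c : Fin (n₀ + 2), Fprod σ (univ.erase c) = 1 := by
    intro c
    obtain ⟨ρ, hiff⟩ := pattern_exists σ c.succAbove (Fin.strictMono_succAbove c)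
    have hcont : PermContains ρ σ := ⟨_, Fin.strictMono_succAbove c, hiff⟩
    have hav : ρ ∈ avoidSet (n₀ + 1) T := pattern_avoids hcont hσav
    have hsρ := avoid_even h (by omega) hav
    rw [pattern_sign σ _ (Fin.strictMono_succAbove c) ρ hiff, image_succAbove] at hsρ
    exact hsρ
  -- two-point deletions
  have h2 : ∀ c d : Fin (n₀ + 2), d ≠ c → Fprod σ ((univ.erase c).erase d) = 1 := by
    intro c d hdc
    obtain ⟨p, hp⟩ := Fin.exists_succAbove_eq hdc
    set f2 : Fin n₀ → Fin (n₀ + 2) := c.succAbove ∘ p.succAbove with hf2def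
    have hf2 : StrictMono f2 := (Fin.strictMono_succAbove c).comp (Fin.strictMono_succAbove p)
    have himg : Finset.image f2 univ = (univ.erase c).erase d := by
      apply Finset.eq_of_subset_of_card_le
      · intro x hx
        obtain ⟨a, -, rfl⟩ := Finset.mem_image.1 hx
        refine Finset.mem_erase.2 ⟨?_, Finset.mem_erase.2 ⟨c.succAbove_ne _, mem_univ _⟩⟩
        rw [← hp]
        exact fun hh => (p.succAbove_ne a) (Fin.succAbove_right_injective hh)
      · rw [Finset.card_erase_of_mem (Finset.mem_erase.2 ⟨hdc, mem_univ d⟩),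
          Finset.card_erase_of_mem (mem_univ c),
          Finset.card_image_of_injective _ hf2.injective,
          card_univ, card_univ, Fintype.card_fin, Fintype.card_fin]
        omega
    obtain ⟨ρ, hiff⟩ := pattern_exists σ f2 hf2
    have hcont : PermContains ρ σ := ⟨_, hf2, hiff⟩
    have hav : ρ ∈ avoidSet n₀ T := pattern_avoids hcont hσav
    have hsρ := avoid_even h (le_refl n₀) hav
    rw [pattern_sign σ _ hf2 ρ hiff, himg] at hsρ
    exact hsρ
  -- the algebra
  have q1 : ∀ c : Fin (n₀ + 2), (∏ x ∈ univ.erase c, eps σ c x) = 1 := by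
    intro c
    have hD := Fprod_erase σ univ (mem_univ c)
    rw [← sign_eq_Fprod_univ, hsign, h1 c, mul_one] at hD
    exact hD.symm
  have q2 : ∀ c d : Fin (n₀ + 2), d ≠ c → eps σ d c = 1 := by
    intro c d hdc
    have hdm : d ∈ (univ : Finset (Fin (n₀ + 2))).erase c :=
      Finset.mem_erase.2 ⟨hdc, mem_univ _⟩
    have hD := Fprod_erase σ (univ.erase c) hdm
    rw [h1 c, h2 c d hdc, mul_one] at hD
    have hcm : c ∈ (univ : Finset (Fin (n₀ + 2))).erase d :=
      Finset.mem_erase.2 ⟨hdc.symm, mem_univ _⟩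
    have hmul := Finset.mul_prod_erase ((univ : Finset (Fin (n₀ + 2))).erase d)
      (fun x => eps σ d x) hcm
    have hee : ((univ : Finset (Fin (n₀ + 2))).erase d).erase c = (univ.erase c).erase d := by
      ext x
      simp only [Finset.mem_erase, Finset.mem_univ, and_true]
      tauto
    rw [hee, ← hD, mul_one, q1 d] at hmul
    exact hmul
  have hmono : StrictMono σ := by
    intro a b hab
    have hq := q2 b a hab.ne
    unfold eps at hq
    split_ifs at hq with hc
    · exact hc.2 hab
    · exact absurd hq (by decide)
  exact hσne (strictMono_perm_eq_one σ hmono)
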